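/- In the Khovanov-Seidel algebra Q_m, the center Z(Q_m) for m > 0 contains all loops ε_1, ..., ε_m: each ε_i commutes with every element of Q_m (in fact ε_i x = 0 = x ε_i for every arrow x, and ε_i e_j = δ_{ij} ε_i = e_j ε_i). -/
import Mathlib


/-- Generators of the Khovanov–Seidel quiver with vertices `0, …, m`:
idempotents `e i`, arrows `u i : i → i+1` (for `0 ≤ i ≤ m-1`, encoded by
`i : Fin m`) and arrows `d i` which encode `d_{i+1} : i+1 → i` (for
`i : Fin m`). -/
inductive KSGen (m : ℕ) : Type
  | e : Fin (m + 1) → KSGen m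
  | u : Fin m → KSGen m
  | d : Fin m → KSGen m

namespace KS

variable (K : Type*) [Field K] (m : ℕ)

open FreeAlgebra

/-- The quiver (path-algebra) relations together with the Khovanov–Seidel
relations `u_i u_{i-1} = 0`, `d_i d_{i+1} = 0`, `d_{i+1} u_i = u_{i-1} d_i` and
the dead-end relation `d_1 u_0 = 0`.  Paths compose right-to-left. -/
inductive Rel : FreeAlgebra K (KSGen m) → FreeAlgebra K (KSGen m) → Prop
  | e_mul (i j : Fin (m + 1)) :
      Rel (ι K (.e i) * ι K (.e j)) (if i = j then ι K (.e i) else 0)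
  | one : Rel (∑ i : Fin (m + 1), ι K (KSGen.e i)) 1
  | u_src (i : Fin m) : Rel (ι K (.u i) * ι K (.e i.castSucc)) (ι K (.u i))
  | u_src' (i : Fin m) (j : Fin (m + 1)) (h : j ≠ i.castSucc) :
      Rel (ι K (.u i) * ι K (.e j)) 0
  | u_tgt (i : Fin m) : Rel (ι K (.e i.succ) * ι K (.u i)) (ι K (.u i))
  | u_tgt' (i : Fin m) (j : Fin (m + 1)) (h : j ≠ i.succ) :
      Rel (ι K (.e j) * ι K (.u i)) 0
  | d_src (i : Fin m) : Rel (ι K (.d i) * ι K (.e i.succ)) (ι K (.d i))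
  | d_src' (i : Fin m) (j : Fin (m + 1)) (h : j ≠ i.succ) :
      Rel (ι K (.d i) * ι K (.e j)) 0
  | d_tgt (i : Fin m) : Rel (ι K (.e i.castSucc) * ι K (.d i)) (ι K (.d i))
  | d_tgt' (i : Fin m) (j : Fin (m + 1)) (h : j ≠ i.castSucc) :
      Rel (ι K (.e j) * ι K (.d i)) 0
  | uu (i j : Fin m) (h : (i : ℕ) = (j : ℕ) + 1) :
      Rel (ι K (.u i) * ι K (.u j)) 0
  | dd (i j : Fin m) (h : (i : ℕ) = (j : ℕ) + 1) :
      Rel (ι K (.d j) * ι K (.d i)) 0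
  | du (i j : Fin m) (h : (i : ℕ) = (j : ℕ) + 1) :
      Rel (ι K (.d i) * ι K (.u i)) (ι K (.u j) * ι K (.d j))
  | deadend (i : Fin m) (h : (i : ℕ) = 0) : Rel (ι K (.d i) * ι K (.u i)) 0

/-- The Khovanov–Seidel quiver algebra `Q_m`. -/
abbrev Qm := RingQuot (Rel K m)

/-- The idempotent (length-zero path) at vertex `i`. -/
noncomputable def eQ (i : Fin (m + 1)) : Qm K m :=
  RingQuot.mkAlgHom K (Rel K m) (ι K (.e i))

/-- The arrow `u_i : i → i+1` (for `i : Fin m`). -/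
noncomputable def uQ (i : Fin m) : Qm K m :=
  RingQuot.mkAlgHom K (Rel K m) (ι K (.u i))

/-- The arrow `d_{i+1} : i+1 → i` (for `i : Fin m`). -/
noncomputable def dQ (i : Fin m) : Qm K m :=
  RingQuot.mkAlgHom K (Rel K m) (ι K (.d i))

/-- The loop `ε_{i+1} = u_i d_{i+1}` at the vertex `i+1` (for `i : Fin m`). -/
noncomputable def epsQ (i : Fin m) : Qm K m := uQ K m i * dQ K m i

/-- An element is an arrow if it is one of the `u_i` or `d_i`. -/
def IsArrow (x : Qm K m) : Prop :=
  (∃ i, x = uQ K m i) ∨ (∃ i, x = dQ K m i)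

/-- The degree-`n` component of the path-length grading on `Q_m`: the span of
paths of length `n`, i.e. of products `e_i · a_n ⋯ a_1` of an idempotent with
`n` arrows. -/
noncomputable def grade (n : ℕ) : Submodule K (Qm K m) :=
  Submodule.span K
    {x | ∃ (i : Fin (m + 1)) (L : List (Qm K m)),
      (∀ a ∈ L, IsArrow K m a) ∧ L.length = n ∧ x = eQ K m i * L.prod}

/-- The path-length grading extended to integer degrees (zero in negative
degrees). -/
noncomputable def gradeZ (n : ℤ) : Submodule K (Qm K m) :=
  if 0 ≤ n then grade K m n.toNat else ⊥

end KS


namespace KS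

variable {K : Type*} [Field K] {m : ℕ}

private lemma rel_eq {a b : FreeAlgebra K (KSGen m)} (h : Rel K m a b) :
    RingQuot.mkAlgHom K (Rel K m) a = RingQuot.mkAlgHom K (Rel K m) b :=
  RingQuot.mkAlgHom_rel K h

lemma ee (i j : Fin (m + 1)) :
    eQ K m i * eQ K m j = if i = j then eQ K m i else 0 := by
  have h := rel_eq (Rel.e_mul (K := K) (m := m) i j)
  rw [map_mul] at h
  unfold eQ
  rw [h]
  split <;> simp

lemma eu (v : Fin (m + 1)) (i : Fin m) :
    eQ K m v * uQ K m i = if v = i.succ then uQ K m i else 0 := by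
  by_cases h : v = i.succ
  · subst h
    have h := rel_eq (Rel.u_tgt (K := K) (m := m) i)
    rw [map_mul] at h
    simpa [eQ, uQ] using h
  · have h2 := rel_eq (Rel.u_tgt' (K := K) (m := m) i v h)
    rw [map_mul] at h2
    simpa [eQ, uQ, h] using h2

lemma ue (i : Fin m) (v : Fin (m + 1)) :
    uQ K m i * eQ K m v = if v = i.castSucc then uQ K m i else 0 := by
  by_cases h : v = i.castSucc
  · subst h
    have h := rel_eq (Rel.u_src (K := K) (m := m) i)
    rw [map_mul] at h
    simpa [eQ, uQ] using h
  · have h2 := rel_eq (Rel.u_src' (K := K) (m := m) i v h)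
    rw [map_mul] at h2
    simpa [eQ, uQ, h] using h2

lemma ed (v : Fin (m + 1)) (i : Fin m) :
    eQ K m v * dQ K m i = if v = i.castSucc then dQ K m i else 0 := by
  by_cases h : v = i.castSucc
  · subst h
    have h := rel_eq (Rel.d_tgt (K := K) (m := m) i)
    rw [map_mul] at h
    simpa [eQ, dQ] using h
  · have h2 := rel_eq (Rel.d_tgt' (K := K) (m := m) i v h)
    rw [map_mul] at h2
    simpa [eQ, dQ, h] using h2

lemma de (i : Fin m) (v : Fin (m + 1)) :
    dQ K m i * eQ K m v = if v = i.succ then dQ K m i else 0 := by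
  by_cases h : v = i.succ
  · subst h
    have h := rel_eq (Rel.d_src (K := K) (m := m) i)
    rw [map_mul] at h
    simpa [eQ, dQ] using h
  · have h2 := rel_eq (Rel.d_src' (K := K) (m := m) i v h)
    rw [map_mul] at h2
    simpa [eQ, dQ, h] using h2

lemma uu_zero (i j : Fin m) (h : (i : ℕ) = (j : ℕ) + 1) :
    uQ K m i * uQ K m j = 0 := by
  have h2 := rel_eq (Rel.uu (K := K) (m := m) i j h)
  rw [map_mul] at h2
  simpa [uQ] using h2

lemma dd_zero (i j : Fin m) (h : (i : ℕ) = (j : ℕ) + 1) :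
    dQ K m j * dQ K m i = 0 := by
  have h2 := rel_eq (Rel.dd (K := K) (m := m) i j h)
  rw [map_mul] at h2
  simpa [dQ] using h2

lemma du_eq (i j : Fin m) (h : (i : ℕ) = (j : ℕ) + 1) :
    dQ K m i * uQ K m i = uQ K m j * dQ K m j := by
  have h2 := rel_eq (Rel.du (K := K) (m := m) i j h)
  rw [map_mul, map_mul] at h2
  simpa [uQ, dQ] using h2

lemma du_zero (i : Fin m) (h : (i : ℕ) = 0) :
    dQ K m i * uQ K m i = 0 := by
  have h2 := rel_eq (Rel.deadend (K := K) (m := m) i h)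
  rw [map_mul] at h2
  simpa [uQ, dQ] using h2

lemma du_ne (i j : Fin m) (h : i ≠ j) : dQ K m j * uQ K m i = 0 := by
  have h1 : dQ K m j = dQ K m j * eQ K m j.succ := by rw [de]; simp
  have h2 : uQ K m i = eQ K m i.succ * uQ K m i := by rw [eu]; simp
  rw [h1, h2, mul_assoc, ← mul_assoc (eQ K m j.succ), ee,
    if_neg (fun hs => h (Fin.succ_injective m hs).symm)]
  simp

/-- `ε_j · u_i = 0`. -/
lemma eps_u (j i : Fin m) : epsQ K m j * uQ K m i = 0 := by
  unfold epsQ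
  by_cases hij : i = j
  · subst hij
    rcases Nat.eq_zero_or_pos (i : ℕ) with h0 | hpos
    · rw [mul_assoc, du_zero i h0, mul_zero]
    · set i' : Fin m := ⟨(i : ℕ) - 1, lt_trans (Nat.sub_lt hpos one_pos) i.isLt⟩
      have hi' : (i : ℕ) = (i' : ℕ) + 1 := by
        simp only [i']
        omega
      rw [mul_assoc, du_eq i i' hi', ← mul_assoc, uu_zero i i' hi', zero_mul]
  · rw [mul_assoc, du_ne i j hij, mul_zero]

/-- `d_i · ε_j = 0`. -/
lemma d_eps (j i : Fin m) : dQ K m i * epsQ K m j = 0 := by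
  unfold epsQ
  by_cases hij : i = j
  · subst hij
    rcases Nat.eq_zero_or_pos (i : ℕ) with h0 | hpos
    · rw [← mul_assoc, du_zero i h0, zero_mul]
    · set i' : Fin m := ⟨(i : ℕ) - 1, lt_trans (Nat.sub_lt hpos one_pos) i.isLt⟩
      have hi' : (i : ℕ) = (i' : ℕ) + 1 := by
        simp only [i']
        omega
      rw [← mul_assoc, du_eq i i' hi', mul_assoc, dd_zero i i' hi', mul_zero]
  · rw [← mul_assoc, du_ne j i (fun h => hij h.symm), zero_mul]

lemma ud_ne (i j : Fin m) (h : i ≠ j) : uQ K m i * dQ K m j = 0 := by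
  have h1 : uQ K m i = uQ K m i * eQ K m i.castSucc := by rw [ue]; simp
  have h2 : dQ K m j = eQ K m j.castSucc * dQ K m j := by rw [ed]; simp
  rw [h1, h2, mul_assoc, ← mul_assoc (eQ K m i.castSucc), ee,
    if_neg (fun hs => h (Fin.castSucc_injective m hs))]
  simp

/-- `u_i · ε_j = 0`. -/
lemma u_eps (j i : Fin m) : uQ K m i * epsQ K m j = 0 := by
  unfold epsQ
  by_cases h : (i : ℕ) = (j : ℕ) + 1
  · rw [← mul_assoc, uu_zero i j h, zero_mul]
  · have hne : i.castSucc ≠ j.succ := by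
      intro hs
      exact h (by simpa using congrArg Fin.val hs)
    have h1 : uQ K m i = uQ K m i * eQ K m i.castSucc := by rw [ue]; simp
    have h2 : uQ K m j = eQ K m j.succ * uQ K m j := by rw [eu]; simp
    rw [h1, h2, mul_assoc, ← mul_assoc (eQ K m i.castSucc),
      ← mul_assoc (eQ K m i.castSucc), ee, if_neg hne]
    simp

/-- `ε_j · d_i = 0`. -/
lemma eps_d (j i : Fin m) : epsQ K m j * dQ K m i = 0 := by
  unfold epsQ
  by_cases h : (i : ℕ) = (j : ℕ) + 1
  · rw [mul_assoc, dd_zero i j h, mul_zero]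
  · have hne : j.succ ≠ i.castSucc := by
      intro hs
      exact h (by simpa using (congrArg Fin.val hs).symm)
    have h1 : dQ K m j = dQ K m j * eQ K m j.succ := by rw [de]; simp
    have h2 : dQ K m i = eQ K m i.castSucc * dQ K m i := by rw [ed]; simp
    rw [mul_assoc, h1, h2, mul_assoc (dQ K m j), ← mul_assoc (eQ K m j.succ),
      ee, if_neg hne]
    simp

lemma eps_e (j : Fin m) (v : Fin (m + 1)) :
    epsQ K m j * eQ K m v = if (v : ℕ) = (j : ℕ) + 1 then epsQ K m j else 0 := by
  unfold epsQ
  rw [mul_assoc, de]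
  have hiff : v = j.succ ↔ (v : ℕ) = (j : ℕ) + 1 := by
    constructor
    · intro h; simpa using congrArg Fin.val h
    · intro h; exact Fin.ext (by simpa using h)
  by_cases h : (v : ℕ) = (j : ℕ) + 1
  · rw [if_pos (hiff.mpr h), if_pos h]
  · rw [if_neg (fun hs => h (hiff.mp hs)), if_neg h, mul_zero]

lemma e_eps (j : Fin m) (v : Fin (m + 1)) :
    eQ K m v * epsQ K m j = if (v : ℕ) = (j : ℕ) + 1 then epsQ K m j else 0 := by
  unfold epsQ
  rw [← mul_assoc, eu]
  have hiff : v = j.succ ↔ (v : ℕ) = (j : ℕ) + 1 := by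
    constructor
    · intro h; simpa using congrArg Fin.val h
    · intro h; exact Fin.ext (by simpa using h)
  by_cases h : (v : ℕ) = (j : ℕ) + 1
  · rw [if_pos (hiff.mpr h), if_pos h]
  · rw [if_neg (fun hs => h (hiff.mp hs)), if_neg h, zero_mul]

end KS

open KS in
/-- **The loops are central in `Q_m`.**
For `m > 0` every loop `ε_i = u_{i-1} d_i` (here `ε_{j+1} = epsQ j` for
`j : Fin m`) lies in the center of `Q_m`: it commutes with every element.  In
fact `ε_i x = 0 = x ε_i` for every arrow `x`, and
`ε_i e_v = δ_{i v} ε_i = e_v ε_i` for every vertex idempotent `e_v`. -/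
theorem epsQ_central (K : Type*) [Field K] (m : ℕ) (j : Fin m) :
    (∀ x : Qm K m, epsQ K m j * x = x * epsQ K m j) ∧
    (∀ x : Qm K m, IsArrow K m x → epsQ K m j * x = 0 ∧ x * epsQ K m j = 0) ∧
    (∀ v : Fin (m + 1),
      epsQ K m j * eQ K m v = (if (v : ℕ) = (j : ℕ) + 1 then epsQ K m j else 0) ∧
      eQ K m v * epsQ K m j = (if (v : ℕ) = (j : ℕ) + 1 then epsQ K m j else 0)) := by

  refine ⟨?_, ?_, ?_⟩
  · intro x
    obtain ⟨y, rfl⟩ := RingQuot.mkAlgHom_surjective K (Rel K m) x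
    induction y using FreeAlgebra.induction with
    | grade0 r =>
        rw [AlgHom.commutes]
        exact (Algebra.commutes r (epsQ K m j)).symm
    | grade1 g =>
        cases g with
        | e v =>
            show epsQ K m j * eQ K m v = eQ K m v * epsQ K m j
            rw [eps_e, e_eps]
        | u i =>
            show epsQ K m j * uQ K m i = uQ K m i * epsQ K m j
            rw [eps_u, u_eps]
        | d i =>
            show epsQ K m j * dQ K m i = dQ K m i * epsQ K m j
            rw [eps_d, d_eps]
    | mul a b ha hb =>
        rw [map_mul, ← mul_assoc, ha, mul_assoc, hb, mul_assoc]
    | add a b ha hb =>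
        rw [map_add, mul_add, add_mul, ha, hb]
  · rintro x (⟨i, rfl⟩ | ⟨i, rfl⟩)
    · exact ⟨eps_u j i, u_eps j i⟩
    · exact ⟨eps_d j i, d_eps j i⟩
  · intro v
    exact ⟨eps_e j v, e_eps j v⟩
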